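/- Let H be a real separable Hilbert space and let μ be a centered Borel probability measure on H with ∫_H ‖u‖² dμ(u) < ∞ and such that there exists c > 0 with ∫_H ⟨h,u⟩⁴ dμ(u) ≤ c² (∫_H ⟨h,u⟩² dμ(u))² for every h ∈ H. Let S be the covariance operator of μ and {e_k, k ≥ 1} an orthonormal eigenbasis of S. If a family {μ_α, α ∈ Θ} of Borel probability measures on H is such that each μ_α is finitely absolutely continuous with respect to μ with constants (c_n^α)_{n≥0} and sup_{α∈Θ} c₂^α < ∞, then: (i) for every α, Σ_{k=1}^∞ ∫_H ⟨e_k,u⟩² dμ_α(du) ≤ c · c₂^α · Σ_{k=1}^∞ ∫_H ⟨e_k,u⟩² dμ(du); (ii) sup_{α∈Θ} Σ_{k=n}^∞ ∫_H ⟨e_k,u⟩² dμ_α(du) → 0 as n → ∞. -/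

import Mathlib

open MeasureTheory ProbabilityTheory Real Filter
open scoped NNReal ENNReal RealInnerProductSpace

noncomputable section

/-- `ν` is finitely absolutely continuous with respect to `μ` with constants `c`. -/
def FinAbsCont {B : Type*} [NormedAddCommGroup B] [NormedSpace ℝ B] [MeasurableSpace B]
    (ν μ : Measure B) (c : ℕ → ℝ) : Prop :=
  ∀ (n : ℕ) (P : MvPolynomial (Fin n) ℝ), P.totalDegree ≤ n →
    ∀ ℓ : Fin n → (B →L[ℝ] ℝ),
      |∫ ω, MvPolynomial.eval (fun i => ℓ i ω) P ∂ν| ≤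
        c n * (∫ ω, (MvPolynomial.eval (fun i => ℓ i ω) P) ^ 2 ∂μ) ^ (1 / 2 : ℝ)

/-- uniform control of the second weak moments along an orthonormal
eigenbasis of the covariance operator of `μ`, for a family `μα` uniformly finitely
absolutely continuous with respect to `μ`. -/
theorem second_moment_bounds_of_finAbsCont
    {H : Type*} [NormedAddCommGroup H] [InnerProductSpace ℝ H] [CompleteSpace H]
    [TopologicalSpace.SeparableSpace H] [MeasurableSpace H] [BorelSpace H]
    (μ : Measure H) [IsProbabilityMeasure μ]
    -- μ has a finite second moment of the norm
    (hmom : Integrable (fun u => ‖u‖ ^ 2) μ)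
    -- μ is centered
    (hcen : ∀ h : H, ∫ u, ⟪h, u⟫ ∂μ = 0)
    -- the fourth moment comparison (consequence of polynomial non-degeneracy)
    (c : ℝ) (hc : 0 < c)
    (h4 : ∀ h : H, ∫ u, ⟪h, u⟫ ^ 4 ∂μ ≤ c ^ 2 * (∫ u, ⟪h, u⟫ ^ 2 ∂μ) ^ 2)
    -- S is the covariance operator of μ
    (S : H →L[ℝ] H)
    (hS : ∀ g h : H, ⟪S g, h⟫ = ∫ u, ⟪g, u⟫ * ⟪h, u⟫ ∂μ)
    -- (e k) is an orthonormal eigenbasis of S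
    (e : ℕ → H) (he : Orthonormal ℝ e)
    (heig : ∀ k : ℕ, ∃ lam : ℝ, S (e k) = lam • e k)
    (hbasis : (Submodule.span ℝ (Set.range e)).topologicalClosure = ⊤)
    {Θ : Type*} [Nonempty Θ] (μα : Θ → Measure H) [∀ α, IsProbabilityMeasure (μα α)]
    -- each μα has all weak moments
    (hαmom : ∀ (α : Θ) (ℓ : H →L[ℝ] ℝ) (k : ℕ), Integrable (fun u => |ℓ u| ^ k) (μα α))
    (cα : Θ → ℕ → ℝ)
    (hfac : ∀ α : Θ, FinAbsCont (μα α) μ (cα α))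
    (hsup2 : BddAbove (Set.range fun α => cα α 2)) :
    (∀ α : Θ, ∑' k : ℕ, ∫ u, ⟪e k, u⟫ ^ 2 ∂(μα α) ≤
        c * cα α 2 * ∑' k : ℕ, ∫ u, ⟪e k, u⟫ ^ 2 ∂μ) ∧
    Tendsto (fun n : ℕ => ⨆ α : Θ, ∑' k : ℕ, ∫ u, ⟪e (k + n), u⟫ ^ 2 ∂(μα α))
      atTop (nhds 0) := by
  classical
  -- abbreviations
  set g : ℕ → ℝ := fun k => ∫ u, ⟪e k, u⟫ ^ 2 ∂μ with hgdef
  set f : Θ → ℕ → ℝ := fun α k => ∫ u, ⟪e k, u⟫ ^ 2 ∂(μα α) with hfdef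
  have hg_nonneg : ∀ k, 0 ≤ g k := fun k => integral_nonneg fun u => sq_nonneg _
  have hf_nonneg : ∀ α k, 0 ≤ f α k := fun α k => integral_nonneg fun u => sq_nonneg _
  -- integrability of ⟪e k, ·⟫ ^ 2 under μ
  have hek : ∀ k, ‖e k‖ = 1 := fun k => he.1 k
  have hint : ∀ k, Integrable (fun u => ⟪e k, u⟫ ^ 2) μ := by
    intro k
    refine hmom.mono ?_ ?_
    · exact ((innerSL ℝ (e k)).continuous.pow 2).aestronglyMeasurable
    · filter_upwards with u
      have h1 : |⟪e k, u⟫| ≤ ‖e k‖ * ‖u‖ := abs_real_inner_le_norm _ _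
      rw [hek k, one_mul] at h1
      have h2 : ⟪e k, u⟫ ^ 2 ≤ ‖u‖ ^ 2 := by
        rw [← sq_abs]
        exact pow_le_pow_left₀ (abs_nonneg _) h1 2
      simp only [Real.norm_eq_abs]
      rw [abs_of_nonneg (sq_nonneg _), abs_of_nonneg (sq_nonneg ‖u‖)]
      exact h2
  -- summability of g via Bessel
  have hgsum : Summable g := by
    refine summable_of_sum_range_le hg_nonneg (c := ∫ u, ‖u‖ ^ 2 ∂μ) ?_
    intro n
    have hsum_int : ∑ k ∈ Finset.range n, g k
        = ∫ u, ∑ k ∈ Finset.range n, ⟪e k, u⟫ ^ 2 ∂μ := by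
      rw [integral_finset_sum _ fun k _ => hint k]
    rw [hsum_int]
    refine integral_mono (integrable_finset_sum _ fun k _ => hint k) hmom ?_
    intro u
    have := Orthonormal.sum_inner_products_le (𝕜 := ℝ) (s := Finset.range n) u he
    simpa [Real.norm_eq_abs, sq_abs] using this
  -- the key pointwise (in k) bound
  have hcα1 : ∀ α, (1 : ℝ) ≤ cα α 2 := by
    intro α
    have h1 := hfac α 2 1 (by simp) (fun _ => 0)
    simpa using h1
  have key : ∀ (α : Θ) (k : ℕ), f α k ≤ c * cα α 2 * g k := by
    intro α k
    have hP := hfac α 2 (MvPolynomial.X 0 ^ 2)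
      (by simp [MvPolynomial.totalDegree_X_pow]) (fun _ => innerSL ℝ (e k))
    simp only [map_pow, MvPolynomial.eval_X, innerSL_apply_apply] at hP
    have h44 : (∫ ω, (⟪e k, ω⟫ ^ 2) ^ 2 ∂μ) = ∫ ω, ⟪e k, ω⟫ ^ 4 ∂μ := by
      simp [← pow_mul]
    rw [h44, abs_of_nonneg (hf_nonneg α k)] at hP
    have h4' := h4 (e k)
    have h4nonneg : 0 ≤ ∫ ω, ⟪e k, ω⟫ ^ 4 ∂μ := by
      refine integral_nonneg fun u => ?_
      positivity
    have hrw : (∫ ω, ⟪e k, ω⟫ ^ 4 ∂μ) ^ (1 / 2 : ℝ) ≤ c * g k := by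
      have h1 : (∫ ω, ⟪e k, ω⟫ ^ 4 ∂μ) ^ (1 / 2 : ℝ)
          ≤ (c ^ 2 * (g k) ^ 2) ^ (1 / 2 : ℝ) :=
        Real.rpow_le_rpow h4nonneg h4' (by norm_num)
      have h2 : (c ^ 2 * (g k) ^ 2) ^ (1 / 2 : ℝ) = c * g k := by
        rw [← Real.sqrt_eq_rpow, show c ^ 2 * (g k) ^ 2 = (c * g k) ^ 2 by ring,
          Real.sqrt_sq (by positivity)]
      linarith
    calc f α k ≤ cα α 2 * (∫ ω, ⟪e k, ω⟫ ^ 4 ∂μ) ^ (1 / 2 : ℝ) := hP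
      _ ≤ cα α 2 * (c * g k) := by
          exact mul_le_mul_of_nonneg_left hrw (le_trans zero_le_one (hcα1 α))
      _ = c * cα α 2 * g k := by ring
  -- summability of f α
  have hfsum : ∀ α, Summable (f α) := fun α =>
    Summable.of_nonneg_of_le (hf_nonneg α) (key α) (hgsum.mul_left _)
  constructor
  · intro α
    calc ∑' k, f α k ≤ ∑' k, c * cα α 2 * g k :=
          Summable.tsum_le_tsum (key α) (hfsum α) (hgsum.mul_left _)
      _ = c * cα α 2 * ∑' k, g k := tsum_mul_left
  · -- second part
    set M : ℝ := ⨆ α, cα α 2 with hMdef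
    have hMα : ∀ α, cα α 2 ≤ M := fun α => le_ciSup hsup2 α
    have hM0 : 0 ≤ M := le_trans zero_le_one
      (le_trans (hcα1 (Classical.arbitrary Θ)) (hMα _))
    have key' : ∀ α k, f α k ≤ c * M * g k := by
      intro α k
      refine (key α k).trans ?_
      have : c * cα α 2 ≤ c * M := mul_le_mul_of_nonneg_left (hMα α) hc.le
      exact mul_le_mul_of_nonneg_right this (hg_nonneg k)
    set T : ℕ → ℝ := fun n => ∑' k, g (k + n) with hTdef
    have hTtend : Tendsto T atTop (nhds 0) := tendsto_sum_nat_add g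
    have hgsum' : ∀ n, Summable fun k => g (k + n) :=
      fun n => (summable_nat_add_iff n).2 hgsum
    have hfsum' : ∀ α n, Summable fun k => f α (k + n) :=
      fun α n => (summable_nat_add_iff n).2 (hfsum α)
    have hGle : ∀ n α, (∑' k, f α (k + n)) ≤ c * M * T n := by
      intro n α
      calc (∑' k, f α (k + n)) ≤ ∑' k, c * M * g (k + n) :=
            Summable.tsum_le_tsum (fun k => key' α (k + n)) (hfsum' α n) ((hgsum' n).mul_left _)
        _ = c * M * T n := tsum_mul_left
    have hbdd : ∀ n, BddAbove (Set.range fun α => ∑' k, f α (k + n)) := by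
      intro n
      exact ⟨c * M * T n, by rintro x ⟨α, rfl⟩; exact hGle n α⟩
    have hsup_le : ∀ n, (⨆ α, ∑' k, f α (k + n)) ≤ c * M * T n :=
      fun n => ciSup_le (hGle n)
    have hsup_nonneg : ∀ n, 0 ≤ ⨆ α, ∑' k, f α (k + n) := by
      intro n
      refine le_trans (show (0:ℝ) ≤ ∑' k, f (Classical.arbitrary Θ) (k + n) from tsum_nonneg fun k => hf_nonneg (Classical.arbitrary Θ) (k + n)) ?_
      exact le_ciSup (hbdd n) (Classical.arbitrary Θ)
    have : Tendsto (fun n => c * M * T n) atTop (nhds 0) := by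
      simpa using hTtend.const_mul (c * M)
    exact squeeze_zero hsup_nonneg hsup_le this
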